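/- Let A be a finite left brace with Soc(A) = {0} and let X ⊆ A be a transitive cycle base of A, regarded as a cycle set with operation x·y := λ_x^{-1}(y). If I is an ideal of A, then the orbit relation of I on X, namely x ∼_I y :⇔ there exists a ∈ I with λ_a(x) = y, is a congruence of the cycle set X. -/
import Mathlib


/-- A left brace structure on an additive abelian group `A`: a group operation `mul`
(with identity `one` and inverses `inv`) satisfying `a ∘ (b + c) + a = a ∘ b + a ∘ c`. -/
structure LeftBrace (A : Type*) [AddCommGroup A] where
  mul : A → A → A
  one : A
  inv : A → A
  mul_assoc' : ∀ a b c, mul (mul a b) c = mul a (mul b c)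
  one_mul' : ∀ a, mul one a = a
  mul_one' : ∀ a, mul a one = a
  inv_mul' : ∀ a, mul (inv a) a = one
  mul_inv' : ∀ a, mul a (inv a) = one
  compat : ∀ a b c, mul a (b + c) + a = mul a b + mul a c

namespace LeftBrace

variable {A : Type*} [AddCommGroup A]

/-- The map `λ_a : b ↦ -a + a ∘ b`. -/
def lam (B : LeftBrace A) (a b : A) : A := -a + B.mul a b

/-- The cycle set operation `x · y := λ_x⁻¹ (y)` associated to a left brace. -/
noncomputable def cop (B : LeftBrace A) (x y : A) : A :=
  @Function.invFun A A ⟨0⟩ (B.lam x) y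

/-- An ideal of a left brace: a normal subgroup of `(A, ∘)` invariant under all `λ_a`. -/
def IsIdeal (B : LeftBrace A) (I : Set A) : Prop :=
  B.one ∈ I ∧ (∀ a ∈ I, ∀ b ∈ I, B.mul a b ∈ I) ∧ (∀ a ∈ I, B.inv a ∈ I) ∧
    (∀ g : A, ∀ a ∈ I, B.mul (B.mul g a) (B.inv g) ∈ I) ∧
    (∀ g : A, ∀ a ∈ I, B.lam g a ∈ I)

end LeftBrace

namespace LeftBrace

variable {A : Type*} [AddCommGroup A] (B : LeftBrace A)

lemma mul_zero_right (a : A) : B.mul a 0 = a := by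
  have h := B.compat a 0 0
  rw [add_zero] at h
  exact (add_left_cancel h).symm

lemma one_eq_zero : B.one = 0 := by
  have := B.mul_zero_right B.one
  rw [B.one_mul'] at this
  exact this.symm

lemma inv_inv' (a : A) : B.inv (B.inv a) = a := by
  have : B.mul (B.mul (B.inv (B.inv a)) (B.inv a)) a = a := by
    rw [B.inv_mul', B.one_mul']
  rw [B.mul_assoc', B.inv_mul', B.mul_one'] at this
  exact this

lemma mul_neg' (a b : A) : B.mul a (-b) = a + a - B.mul a b := by
  have h := B.compat a b (-b)
  rw [add_neg_cancel, B.mul_zero_right] at h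
  have : B.mul a (-b) = a + a - B.mul a b := by
    have h2 : a + a = B.mul a b + B.mul a (-b) := h
    rw [eq_sub_iff_add_eq, add_comm, h2]
  exact this

lemma mul_eq_add_lam (a c : A) : B.mul a c = a + B.lam a c := by
  unfold lam; abel

lemma lam_mul (a b c : A) : B.lam (B.mul a b) c = B.lam a (B.lam b c) := by
  have h1 := B.compat a (-b) (B.mul b c)
  rw [B.mul_neg'] at h1
  unfold lam
  have h2 := eq_sub_of_add_eq h1
  rw [B.mul_assoc', h2]; abel

lemma lam_zero (b : A) : B.lam 0 b = b := by
  have := B.one_mul' b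
  rw [B.one_eq_zero] at this
  unfold lam; rw [this]; abel

lemma lam_lam_inv (a b : A) : B.lam a (B.lam (B.inv a) b) = b := by
  rw [← B.lam_mul, B.mul_inv', B.one_eq_zero, B.lam_zero]

lemma lam_inv_lam (a b : A) : B.lam (B.inv a) (B.lam a b) = b := by
  rw [← B.lam_mul, B.inv_mul', B.one_eq_zero, B.lam_zero]

lemma lam_bijective (a : A) : Function.Bijective (B.lam a) :=
  Function.bijective_iff_has_inverse.2 ⟨B.lam (B.inv a), B.lam_inv_lam a, B.lam_lam_inv a⟩

lemma lam_cop [Nonempty A] (x u : A) : B.lam x (B.cop x u) = u := by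
  have : B.cop x u = Function.invFun (B.lam x) u := rfl
  rw [this, Function.rightInverse_invFun (B.lam_bijective x).2]

end LeftBrace

theorem stmt8 {A : Type*} [AddCommGroup A] [Finite A] (B : LeftBrace A)
    -- Soc(A) = {0}
    (hsoc : {a : A | ∀ b, a + b = B.mul a b} = {0})
    -- X is a transitive cycle base: an orbit of the λ-action generating (A, +)
    (X : Set A) (hne : X.Nonempty)
    (hclosed : ∀ a : A, ∀ x ∈ X, B.lam a x ∈ X)
    (horbit : ∀ x ∈ X, ∀ y ∈ X, ∃ a : A, B.lam a x = y)
    (hgen : AddSubgroup.closure X = ⊤)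
    -- I is an ideal of A
    (I : Set A) (hI : B.IsIdeal I) :
    -- the orbit relation of I on X is a congruence of the cycle set X
    (∀ x ∈ X, ∃ a ∈ I, B.lam a x = x) ∧
    (∀ x ∈ X, ∀ y ∈ X, (∃ a ∈ I, B.lam a x = y) → ∃ a ∈ I, B.lam a y = x) ∧
    (∀ x ∈ X, ∀ y ∈ X, ∀ z ∈ X,
      (∃ a ∈ I, B.lam a x = y) → (∃ a ∈ I, B.lam a y = z) → ∃ a ∈ I, B.lam a x = z) ∧
    (∀ x ∈ X, ∀ y ∈ X, ∀ u ∈ X, ∀ v ∈ X,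
      (∃ a ∈ I, B.lam a x = y) → (∃ a ∈ I, B.lam a u = v) →
      ∃ a ∈ I, B.lam a (B.cop x u) = B.cop y v) := by
  have : Nonempty A := ⟨0⟩
  obtain ⟨hone, hmul, hinv, hnorm, hlam⟩ := hI
  have hzero : (0 : A) ∈ I := B.one_eq_zero ▸ hone
  -- I is closed under negation and addition
  have hneg : ∀ a ∈ I, -a ∈ I := by
    intro a ha
    have h : B.lam a (B.inv a) = -a := by
      have := B.mul_eq_add_lam a (B.inv a)
      rw [B.mul_inv', B.one_eq_zero] at this
      have := this.symm
      rw [← eq_neg_add_iff_add_eq] at this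
      rw [this]; abel
    exact h ▸ hlam a (B.inv a) (hinv a ha)
  have hadd : ∀ a ∈ I, ∀ b ∈ I, a + b ∈ I := by
    intro a ha b hb
    have h : B.mul a (B.lam (B.inv a) b) = a + b := by
      rw [B.mul_eq_add_lam, B.lam_lam_inv]
    exact h ▸ hmul a ha _ (hlam (B.inv a) b hb)
  -- the key lemma: if b ∈ I, then x - lam b x ∈ I, for any x
  have hkey : ∀ b ∈ I, ∀ x : A, x - B.lam b x ∈ I := by
    intro b hb x
    set b' := B.mul (B.mul (B.inv x) b) x with hb'def
    have hb' : b' ∈ I := by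
      have := hnorm (B.inv x) b hb
      rwa [B.inv_inv'] at this
    have hbx : B.mul b x = B.mul x b' := by
      rw [hb'def, ← B.mul_assoc', ← B.mul_assoc', B.mul_inv', B.one_mul']
    have : x - B.lam b x = b - B.lam x b' := by
      unfold LeftBrace.lam
      rw [hbx, B.mul_eq_add_lam x b']
      abel
    rw [this, sub_eq_add_neg]
    exact hadd b hb _ (hneg _ (hlam x b' hb'))
  -- if b ∈ I and y = lam b x then mul x (inv y) ∈ I
  have hcoset : ∀ b ∈ I, ∀ x y : A, B.lam b x = y → B.mul x (B.inv y) ∈ I := by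
    intro b hb x y hxy
    have hj : x - y ∈ I := hxy ▸ hkey b hb x
    have hd : B.lam (B.inv y) (x - y) ∈ I := hlam _ _ hj
    have hyd : B.mul y (B.lam (B.inv y) (x - y)) = x := by
      rw [B.mul_eq_add_lam, B.lam_lam_inv]; abel
    have := hnorm y _ hd
    rwa [hyd] at this
  refine ⟨?_, ?_, ?_, ?_⟩
  · intro x _
    exact ⟨0, hzero, B.lam_zero x⟩
  · intro x _ y _ ⟨a, ha, hax⟩
    exact ⟨B.inv a, hinv a ha, by rw [← hax, B.lam_inv_lam]⟩
  · intro x _ y _ z _ ⟨a, ha, hax⟩ ⟨b, hb, hby⟩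
    exact ⟨B.mul b a, hmul b hb a ha, by rw [B.lam_mul, hax, hby]⟩
  · intro x _ y _ u _ v _ ⟨b, hb, hbx⟩ ⟨c, hc, hcu⟩
    have hp : B.mul x (B.inv y) ∈ I := hcoset b hb x y hbx
    set a := B.mul (B.mul (B.inv y) (B.mul c (B.mul x (B.inv y)))) y with hadef
    have haI : a ∈ I := by
      have := hnorm (B.inv y) _ (hmul c hc _ hp)
      rwa [B.inv_inv'] at this
    have hya : B.mul y a = B.mul c x := by
      rw [hadef, ← B.mul_assoc', ← B.mul_assoc', B.mul_inv', B.one_mul',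
        B.mul_assoc', B.mul_assoc', B.inv_mul', B.mul_one']
    refine ⟨a, haI, (B.lam_bijective y).1 ?_⟩
    rw [← B.lam_mul, hya, B.lam_mul, B.lam_cop, B.lam_cop, hcu]
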